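/- Let D be a τ-atomic integral domain with τ symmetric, refinable, and associate preserving. Then D is a τ-finite factorization domain if and only if G_τ(x) is a finite graph for every x ∈ D^#. -/

import Mathlib

/-- `a` is a nonzero nonunit, i.e. an element of `D^#`. -/
def NzNonunit {D : Type*} [CommRing D] (a : D) : Prop := a ≠ 0 ∧ ¬ IsUnit a

/-- `l` is the list of factors of a `τ`-factorization of `a`:
`a = λ * l.prod` for a unit `λ`, the factors are nonzero nonunits and pairwise `τ`-related. -/
def TauFact {D : Type*} [CommRing D] (τ : D → D → Prop) (l : List D) (a : D) : Prop :=
  l ≠ [] ∧ (∀ b ∈ l, NzNonunit b) ∧ l.Pairwise τ ∧ ∃ u : Dˣ, a = (u : D) * l.prod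

/-- `b` τ-divides `a`: `b` occurs as a factor in some τ-factorization of `a`. -/
def TauDvd {D : Type*} [CommRing D] (τ : D → D → Prop) (b a : D) : Prop :=
  ∃ l, TauFact τ l a ∧ b ∈ l

/-- `a` is τ-irreducible (a τ-atom): all its τ-factorizations are trivial. -/
def TauIrred {D : Type*} [CommRing D] (τ : D → D → Prop) (a : D) : Prop :=
  NzNonunit a ∧ ∀ l, TauFact τ l a → l.length = 1

/-- `l` is a τ-atomic factorization of `a`. -/
def TauAtomicFact {D : Type*} [CommRing D] (τ : D → D → Prop) (l : List D) (a : D) : Prop :=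
  TauFact τ l a ∧ ∀ b ∈ l, TauIrred τ b

/-- `D` is τ-atomic: every nonzero nonunit has a τ-atomic factorization. -/
def TauAtomic {D : Type*} [CommRing D] (τ : D → D → Prop) : Prop :=
  ∀ a : D, NzNonunit a → ∃ l, TauAtomicFact τ l a

def TauSymm {D : Type*} [CommRing D] (τ : D → D → Prop) : Prop :=
  ∀ a b, τ a b → τ b a

/-- τ is associate preserving. -/
def TauAssocPres {D : Type*} [CommRing D] (τ : D → D → Prop) : Prop :=
  ∀ a b b' : D, τ a b → Associated b b' → τ a b'

/-- τ is refinable: replacing each factor of a τ-factorization by a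
τ-factorization of it again yields a τ-factorization. -/
def TauRefinable {D : Type*} [CommRing D] (τ : D → D → Prop) : Prop :=
  ∀ (a : D) (l : List D) (F : List (List D)),
    TauFact τ l a → List.Forall₂ (fun b m => TauFact τ m b) l F →
    TauFact τ F.flatten a

/-- `a` is a vertex of the τ-irreducible divisor graph `G_τ(x)`. -/
def GVert {D : Type*} [CommRing D] (τ : D → D → Prop) (x a : D) : Prop :=
  TauIrred τ a ∧ TauDvd τ a x

/-- `a` and `b` are adjacent (distinct, i.e. non-associated, vertices joined by an edge)
in `G_τ(x)`: some τ-factorization of `x` contains associates of both. -/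
def GAdj {D : Type*} [CommRing D] (τ : D → D → Prop) (x a b : D) : Prop :=
  GVert τ x a ∧ GVert τ x b ∧ ¬ Associated a b ∧
  ∃ l, TauFact τ l x ∧ (∃ a' ∈ l, Associated a a') ∧ (∃ b' ∈ l, Associated b b')

/-- `G_τ(x)` is connected (vertices are taken up to associates). -/
def GConnected {D : Type*} [CommRing D] (τ : D → D → Prop) (x : D) : Prop :=
  ∀ a b, GVert τ x a → GVert τ x b →
    Relation.ReflTransGen (fun u v => GAdj τ x u v ∨ Associated u v) a b

/-- The reduced graph `G̅_τ(x)` (loops deleted) is connected; loops do not affect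
connectivity, so this is connectivity with respect to the same adjacency relation. -/
def GBarConnected {D : Type*} [CommRing D] (τ : D → D → Prop) (x : D) : Prop :=
  ∀ a b, GVert τ x a → GVert τ x b →
    Relation.ReflTransGen (fun u v => GAdj τ x u v ∨ Associated u v) a b

/-- `G_τ(x)` is a pseudoclique: any two non-associated vertices are adjacent.
(Equivalently, the reduced graph `G̅_τ(x)` is a clique / complete graph.) -/
def GPseudoclique {D : Type*} [CommRing D] (τ : D → D → Prop) (x : D) : Prop :=
  ∀ a b, GVert τ x a → GVert τ x b → ¬ Associated a b → GAdj τ x a b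

/-- `Diam(G_τ(x)) ≤ 1`: any two vertices are equal (associated) or adjacent. -/
def GDiamLeOne {D : Type*} [CommRing D] (τ : D → D → Prop) (x : D) : Prop :=
  ∀ a b, GVert τ x a → GVert τ x b → Associated a b ∨ GAdj τ x a b

/-- `G_τ(x)` has finitely many vertices (up to associates). -/
def GVertFinite {D : Type*} [CommRing D] (τ : D → D → Prop) (x : D) : Prop :=
  ∃ s : Finset D, ∀ a, GVert τ x a → ∃ c ∈ s, Associated a c

/-- The vertex `a` of `G_τ(x)` has finite degree: finitely many adjacent vertices
up to associates (loops not counted). -/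
def GDegFinite {D : Type*} [CommRing D] (τ : D → D → Prop) (x a : D) : Prop :=
  ∃ s : Finset D, ∀ b, GAdj τ x a b → ∃ c ∈ s, Associated b c

/-- The vertex `a` of `G_τ(x)` carries finitely many loops: there is a uniform bound on
the number of occurrences of associates of `a` in τ-atomic factorizations of `x`. -/
def GLoopsFinite {D : Type*} [CommRing D] (τ : D → D → Prop) (x a : D) : Prop :=
  ∃ N : ℕ, ∀ l m : List D, TauAtomicFact τ l x → m.Sublist l →
    (∀ b ∈ m, Associated a b) → m.length ≤ N

/-- `D` satisfies τ-ACCP. -/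
def TauACCP {D : Type*} [CommRing D] (τ : D → D → Prop) : Prop :=
  ∀ a : ℕ → D, (∀ i, TauDvd τ (a (i + 1)) (a i)) →
    ∃ N, ∀ i, N ≤ i → Associated (a i) (a N)

/-- `D` is a τ-UFD. -/
def TauUFD {D : Type*} [CommRing D] (τ : D → D → Prop) : Prop :=
  TauAtomic τ ∧ ∀ (x : D) (l₁ l₂ : List D), TauAtomicFact τ l₁ x → TauAtomicFact τ l₂ x →
    Multiset.Rel Associated (l₁ : Multiset D) (l₂ : Multiset D)

/-- `D` is a τ-FFD: each nonzero nonunit has only finitely many τ-factorizations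
up to rearrangement and associates. -/
def TauFFD {D : Type*} [CommRing D] (τ : D → D → Prop) : Prop :=
  ∀ x : D, NzNonunit x → ∃ S : Finset (Multiset D),
    ∀ l : List D, TauFact τ l x → ∃ m ∈ S, Multiset.Rel Associated (l : Multiset D) m

/-- `D` is a τ-WFFD: each nonzero nonunit has finitely many τ-divisors up to associates. -/
def TauWFFD {D : Type*} [CommRing D] (τ : D → D → Prop) : Prop :=
  ∀ x : D, NzNonunit x → ∃ s : Finset D,
    ∀ b, TauDvd τ b x → ∃ c ∈ s, Associated b c

/-- `D` is a τ-idf domain: each nonzero nonunit has finitely many τ-irreducible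
τ-divisors up to associates. -/
def TauIdf {D : Type*} [CommRing D] (τ : D → D → Prop) : Prop :=
  ∀ x : D, NzNonunit x → ∃ s : Finset D,
    ∀ b, TauIrred τ b → TauDvd τ b x → ∃ c ∈ s, Associated b c



section Aux
variable {D : Type*} [CommRing D]

open Classical in
private theorem relMem {r : D → D → Prop} {s t : Multiset D} (h : Multiset.Rel r s t)
    {a : D} (ha : a ∈ s) : ∃ b ∈ t, r a b := by
  obtain ⟨s', rfl⟩ := Multiset.exists_cons_of_mem ha
  obtain ⟨b, t', hab, _, rfl⟩ := Multiset.rel_cons_left.mp h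
  exact ⟨b, Multiset.mem_cons_self _ _, hab⟩

private theorem listProdAssoc (r : D → D) :
    ∀ (m : List D), (∀ e ∈ m, Associated e (r e)) → Associated m.prod ((m.map r).prod) := by
  intro m
  induction m with
  | nil => intro _; simp
  | cons e t ih =>
    intro h
    simp only [List.map_cons, List.prod_cons]
    exact (h e (List.mem_cons_self)).mul_mul (ih fun b hb => h b (List.mem_cons_of_mem _ hb))

private theorem relMapAux (f : D → D) :
    ∀ (l : List D), (∀ b ∈ l, Associated b (f b)) →
      Multiset.Rel Associated (l : Multiset D) ((l.map f : List D) : Multiset D) := by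
  intro l
  induction l with
  | nil => intro _; simp
  | cons b t ih =>
    intro h
    simp only [List.map_cons, ← Multiset.cons_coe]
    exact Multiset.Rel.cons (h b (List.mem_cons_self))
      (ih fun c hc => h c (List.mem_cons_of_mem _ hc))

open Classical in
private theorem leSmul (M : ℕ) (t : Finset D) (m : Multiset D)
    (hmem : ∀ a ∈ m, a ∈ t) (hcard : Multiset.card m ≤ M) : m ≤ M • t.val := by
  rw [Multiset.le_iff_count]
  intro a
  by_cases h : a ∈ m
  · have hat : a ∈ t.val := hmem a h
    rw [Multiset.count_nsmul, Multiset.count_eq_one_of_mem t.nodup hat, mul_one]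
    exact le_trans (Multiset.count_le_card a m) hcard
  · simp [Multiset.count_eq_zero_of_notMem h]

private theorem flattenLen : ∀ (L : List (List D)), (∀ m ∈ L, m ≠ []) →
    L.length ≤ L.flatten.length := by
  intro L
  induction L with
  | nil => simp
  | cons m t ih =>
    intro h
    simp only [List.length_cons, List.flatten_cons, List.length_append]
    have h1 : 1 ≤ m.length := List.length_pos_iff.mpr (h m (List.mem_cons_self))
    have h2 := ih fun m' hm' => h m' (List.mem_cons_of_mem _ hm')
    omega

end Aux

set_option maxHeartbeats 1000000
open Classical

theorem stmt10 {D : Type*} [CommRing D] [IsDomain D] (τ : D → D → Prop)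
    (hsym : TauSymm τ) (href : TauRefinable τ) (hap : TauAssocPres τ)
    (hatomic : TauAtomic τ) :
    TauFFD τ ↔
      ∀ x : D, NzNonunit x →
        GVertFinite τ x ∧ ∀ a, GVert τ x a → GLoopsFinite τ x a := by
  constructor
  · -- forward: FFD → finite graph
    intro hffd x hx
    obtain ⟨S, hS⟩ := hffd x hx
    constructor
    · refine ⟨S.biUnion (fun m => m.toFinset), ?_⟩
      rintro a ⟨_, l, hl, hal⟩
      obtain ⟨m, hmS, hrel⟩ := hS l hl
      obtain ⟨c, hcm, hac⟩ := relMem hrel (show a ∈ (l : Multiset D) from hal)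
      exact ⟨c, Finset.mem_biUnion.mpr ⟨m, hmS, Multiset.mem_toFinset.mpr hcm⟩, hac⟩
    · intro a _
      refine ⟨S.sup Multiset.card, fun l m hl hml _ => ?_⟩
      obtain ⟨m', hm'S, hrel⟩ := hS l hl.1
      calc m.length ≤ l.length := hml.length_le
        _ = Multiset.card (l : Multiset D) := (Multiset.coe_card l).symm
        _ = Multiset.card m' := Multiset.card_eq_card_of_rel hrel
        _ ≤ S.sup Multiset.card := Finset.le_sup hm'S
  · -- backward: finite graph → FFD
    intro hG x hx
    obtain ⟨⟨s, hs⟩, hloops⟩ := hG x hx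
    -- per-representative loop bound
    have key : ∀ c : D, ∃ N : ℕ, ∀ l m : List D, TauAtomicFact τ l x → m.Sublist l →
        (∀ b ∈ m, Associated c b) → m.length ≤ N := by
      intro c
      by_cases h : ∃ a, GVert τ x a ∧ Associated a c
      · obtain ⟨a, ha, hac⟩ := h
        obtain ⟨N, hN⟩ := hloops a ha
        exact ⟨N, fun l m hl hml hm => hN l m hl hml fun b hb => hac.trans (hm b hb)⟩
      · refine ⟨0, fun l m hl hml hm => ?_⟩
        match m with
        | [] => simp
        | b :: t =>
          exfalso
          have hbl : b ∈ l := hml.subset (List.mem_cons_self)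
          exact h ⟨b, ⟨hl.2 b hbl, ⟨l, hl.1, hbl⟩⟩, (hm b (List.mem_cons_self)).symm⟩
    choose N hN using key
    set M := ∑ c ∈ s, N c with hM
    -- length bound on atomic factorizations
    have sum_filter : ∀ (l : List D), (∀ b ∈ l, ∃ c ∈ s, Associated c b) →
        l.length ≤ ∑ c ∈ s, (l.filter (fun b => decide (Associated c b))).length := by
      intro l
      induction l with
      | nil => simp
      | cons b t ih =>
        intro h
        obtain ⟨c0, hc0s, hc0⟩ := h b (List.mem_cons_self)
        have ht := ih fun b' hb' => h b' (List.mem_cons_of_mem _ hb')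
        have hmono : ∀ c ∈ s, (t.filter (fun b' => decide (Associated c b'))).length ≤
            ((b :: t).filter (fun b' => decide (Associated c b'))).length := by
          intro c _
          rw [List.filter_cons]
          split
          · simp [Nat.le_succ]
          · exact le_refl _
        have hstrict : (t.filter (fun b' => decide (Associated c0 b'))).length <
            ((b :: t).filter (fun b' => decide (Associated c0 b'))).length := by
          rw [List.filter_cons, if_pos (by simpa using hc0)]
          simp
        have := Finset.sum_lt_sum (f := fun c => (t.filter (fun b' => decide (Associated c b'))).length)
          (g := fun c => ((b :: t).filter (fun b' => decide (Associated c b'))).length)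
          hmono ⟨c0, hc0s, hstrict⟩
        simpa [List.length_cons] using Nat.succ_le_of_lt (lt_of_le_of_lt (by simpa using ht) this)
    have lenbound : ∀ l : List D, TauAtomicFact τ l x → l.length ≤ M := by
      intro l hl
      have h1 : ∀ b ∈ l, ∃ c ∈ s, Associated c b := by
        intro b hb
        obtain ⟨c, hcs, hbc⟩ := hs b ⟨hl.2 b hb, ⟨l, hl.1, hb⟩⟩
        exact ⟨c, hcs, hbc.symm⟩
      refine le_trans (sum_filter l h1) (Finset.sum_le_sum fun c _ => ?_)
      exact hN c l _ hl List.filter_sublist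
        (fun b hb => by simpa using (List.mem_filter.mp hb).2)
    -- representative map
    have hr' : ∀ e : D, ∃ c, GVert τ x e → c ∈ s ∧ Associated e c := by
      intro e
      by_cases h : GVert τ x e
      · obtain ⟨c, hc, he⟩ := hs e h
        exact ⟨c, fun _ => ⟨hc, he⟩⟩
      · exact ⟨e, fun h' => absurd h' h⟩
    choose r hrspec using hr'
    -- atomic factorization choice
    have hg' : ∀ b : D, ∃ m, NzNonunit b → TauAtomicFact τ m b := by
      intro b
      by_cases h : NzNonunit b
      · obtain ⟨m, hm⟩ := hatomic b h
        exact ⟨m, fun _ => hm⟩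
      · exact ⟨[], fun h' => absurd h' h⟩
    choose g hgspec using hg'
    set factorSet : Finset D := ((M • s.val).powerset.toFinset).image Multiset.prod with hfS
    refine ⟨(M • factorSet.val).powerset.toFinset, ?_⟩
    intro l hl
    have hnz : ∀ b ∈ l, NzNonunit b := hl.2.1
    set F : List (List D) := l.map g with hF
    have hF2 : List.Forall₂ (fun b m => TauFact τ m b) l F := by
      rw [hF, List.forall₂_map_right_iff, List.forall₂_same]
      exact fun b hb => (hgspec b (hnz b hb)).1
    have hflat : TauFact τ F.flatten x := href x l F hl hF2
    have hflatAtomic : TauAtomicFact τ F.flatten x := by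
      refine ⟨hflat, ?_⟩
      intro b hb
      obtain ⟨m, hmF, hbm⟩ := List.mem_flatten.mp hb
      obtain ⟨a, hal, rfl⟩ := List.mem_map.mp hmF
      exact (hgspec a (hnz a hal)).2 b hbm
    have hvert : ∀ e ∈ F.flatten, GVert τ x e :=
      fun e he => ⟨hflatAtomic.2 e he, ⟨F.flatten, hflat, he⟩⟩
    have hflatlen : F.flatten.length ≤ M := lenbound _ hflatAtomic
    have hchunk : ∀ b ∈ l, (g b).Sublist F.flatten := by
      intro b hb
      exact List.sublist_flatten_of_mem (List.mem_map_of_mem hb)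
    have hllen : l.length ≤ M := by
      have : l.length = F.length := by simp [hF]
      rw [this]
      refine le_trans (flattenLen F ?_) hflatlen
      intro m hm
      obtain ⟨a, hal, rfl⟩ := List.mem_map.mp hm
      exact (hgspec a (hnz a hal)).1.1
    set f : D → D := fun b => ((g b).map r).prod with hf
    have hgvert : ∀ b ∈ l, ∀ e ∈ g b, GVert τ x e := by
      intro b hb e he
      exact hvert e ((hchunk b hb).subset he)
    have hassoc : ∀ b ∈ l, Associated b (f b) := by
      intro b hb
      obtain ⟨u, hu⟩ := (hgspec b (hnz b hb)).1.2.2.2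
      have h1 : Associated (g b).prod b := ⟨u, by rw [mul_comm]; exact hu.symm⟩
      exact h1.symm.trans (listProdAssoc r (g b)
        fun e he => (hrspec e (hgvert b hb e he)).2)
    have hfmem : ∀ b ∈ l, f b ∈ factorSet := by
      intro b hb
      rw [hfS, Finset.mem_image]
      refine ⟨(((g b).map r : List D) : Multiset D), ?_, by simp [hf, Multiset.prod_coe]⟩
      rw [Multiset.mem_toFinset, Multiset.mem_powerset]
      refine leSmul M s _ ?_ ?_
      · intro a ha
        obtain ⟨e, he, rfl⟩ := List.mem_map.mp (by exact_mod_cast ha)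
        exact Finset.mem_val.mpr ((hrspec e (hgvert b hb e he)).1)
      · rw [Multiset.coe_card, List.length_map]
        exact le_trans (hchunk b hb).length_le hflatlen
    refine ⟨((l.map f : List D) : Multiset D), ?_, relMapAux f l hassoc⟩
    rw [Multiset.mem_toFinset, Multiset.mem_powerset]
    refine leSmul M factorSet _ ?_ ?_
    · intro a ha
      obtain ⟨b, hb, rfl⟩ := List.mem_map.mp (by exact_mod_cast ha)
      exact Finset.mem_val.mpr (hfmem b hb)
    · rw [Multiset.coe_card, List.length_map]
      exact hllen
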